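/- Let ω ∈ ℂ be a primitive cube root of unity and let L₁ = {[x₀:x₁:x₂:x₃:x₄] ∈ ℙ⁴(ℂ) : x₀ + x₃ = 0, x₄ + x₁ = 0, x₂ = 0}. Then: (i) L₁ is contained in the quadric Q = {2x₂² = x₁x₃ − x₀x₄}; (ii) τ(L₁) = L₁ and σ(L₁) = L₁; (iii) the set {t ∈ ℙ¹(ℂ) : ψ(t) ∈ L₁} equals {[1:−1], [1:−ω], [1:−ω²]}. In particular, L₁ is a G-invariant trisecant line of the curve Γ₁ = ψ(ℙ¹). -/
import Mathlib


noncomputable section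

/-- Projective 4-space over ℂ. -/
abbrev P4 := Projectivization ℂ (Fin 5 → ℂ)

/-- Projective line over ℂ. -/
abbrev P1 := Projectivization ℂ (Fin 2 → ℂ)

/-- Homogeneous coordinates of ψ([x:y]) = [x⁵ : 2x³y² + y⁵ : x⁴y + xy⁴ : 2x²y³ + x⁵ : y⁵]. -/
def psiVec (x y : ℂ) : Fin 5 → ℂ :=
  ![x ^ 5, 2 * x ^ 3 * y ^ 2 + y ^ 5, x ^ 4 * y + x * y ^ 4, 2 * x ^ 2 * y ^ 3 + x ^ 5, y ^ 5]

lemma psiVec_rep_ne_zero (t : P1) : psiVec (t.rep 0) (t.rep 1) ≠ 0 := by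
  intro h
  apply t.rep_nonzero
  have h0 := congrFun h 0
  have h4 := congrFun h 4
  simp [psiVec] at h0 h4
  funext i
  fin_cases i
  · simpa using h0
  · simpa using h4

/-- The map ψ : ℙ¹ → ℙ⁴ with image the rational quintic Γ₁. -/
def psiP (t : P1) : P4 :=
  Projectivization.mk ℂ (psiVec (t.rep 0) (t.rep 1)) (psiVec_rep_ne_zero t)

/-- The line L₁ = {x₀ + x₃ = 0, x₄ + x₁ = 0, x₂ = 0} ⊂ ℙ⁴. -/
def lineL1 : Set P4 :=
  {p : P4 | p.rep 0 + p.rep 3 = 0 ∧ p.rep 4 + p.rep 1 = 0 ∧ p.rep 2 = 0}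

/-- The quadric threefold Q = {2x₂² = x₁x₃ − x₀x₄} ⊂ ℙ⁴. -/
def quadricQ4 : Set P4 :=
  {p : P4 | 2 * p.rep 2 ^ 2 = p.rep 1 * p.rep 3 - p.rep 0 * p.rep 4}

/-- A diagonal linear automorphism of ℂⁿ. -/
def diagEquiv {n : ℕ} (d : Fin n → ℂ) (hd : ∀ i, d i ≠ 0) : (Fin n → ℂ) ≃ₗ[ℂ] (Fin n → ℂ) :=
  LinearEquiv.piCongrRight fun i => LinearEquiv.smulOfNeZero ℂ ℂ (d i) (hd i)

/-- The linear automorphism of ℂ⁵ inducing τ : [x₀:x₁:x₂:x₃:x₄] ↦ [x₄:x₃:x₂:x₁:x₀]. -/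
def tauEquiv4 : (Fin 5 → ℂ) ≃ₗ[ℂ] (Fin 5 → ℂ) :=
  LinearEquiv.funCongrLeft ℂ ℂ (Equiv.subLeft (4 : Fin 5))

/-- The projective involution τ of ℙ⁴. -/
def tauP4 : P4 → P4 := Projectivization.map tauEquiv4.toLinearMap tauEquiv4.injective

/-- The linear automorphism of ℂ⁵ inducing
σ : [x₀:x₁:x₂:x₃:x₄] ↦ [x₀:ω²x₁:ωx₂:x₃:ω²x₄], for ω ≠ 0. -/
def sigmaEquiv4 (ω : ℂ) (hω : ω ≠ 0) : (Fin 5 → ℂ) ≃ₗ[ℂ] (Fin 5 → ℂ) :=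
  diagEquiv ![1, ω ^ 2, ω, 1, ω ^ 2]
    (by intro i; fin_cases i <;> simp [hω])

/-- The projective automorphism σ of ℙ⁴. -/
def sigmaP4 (ω : ℂ) (hω : ω ≠ 0) : P4 → P4 :=
  Projectivization.map (sigmaEquiv4 ω hω).toLinearMap (sigmaEquiv4 ω hω).injective


/-! ### Auxiliary lemmas -/

open Projectivization in
lemma mk_congr' {v w : Fin 5 → ℂ} (hv : v ≠ 0) (hw : w ≠ 0) (h : v = w) :
    Projectivization.mk ℂ v hv = Projectivization.mk ℂ w hw := by subst h; rfl

lemma mem_lineL1_mk (v : Fin 5 → ℂ) (hv : v ≠ 0) :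
    Projectivization.mk ℂ v hv ∈ lineL1 ↔ (v 0 + v 3 = 0 ∧ v 4 + v 1 = 0 ∧ v 2 = 0) := by
  obtain ⟨a, ha⟩ := Projectivization.exists_smul_eq_mk_rep ℂ v hv
  have ha' : ∀ i, (Projectivization.mk ℂ v hv).rep i = (a : ℂ) * v i := by
    intro i; rw [← ha]; simp [Units.smul_def]
  have ha0 : (a : ℂ) ≠ 0 := a.ne_zero
  simp only [lineL1, Set.mem_setOf_eq]
  rw [ha' 0, ha' 3, ha' 4, ha' 1, ha' 2,
    show (a:ℂ) * v 0 + a * v 3 = a * (v 0 + v 3) by ring,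
    show (a:ℂ) * v 4 + a * v 1 = a * (v 4 + v 1) by ring,
    mul_eq_zero, mul_eq_zero, mul_eq_zero]
  simp [ha0]

lemma P1_eq_mk (t : P1) (c : ℂ) (hc : (![1, -c] : Fin 2 → ℂ) ≠ 0) :
    t = Projectivization.mk ℂ ![1, -c] hc ↔ t.rep 0 ≠ 0 ∧ t.rep 1 = -c * t.rep 0 := by
  constructor
  · intro h
    have h2 : Projectivization.mk ℂ t.rep t.rep_nonzero = Projectivization.mk ℂ ![1, -c] hc := by
      rw [Projectivization.mk_rep]; exact h
    obtain ⟨a, ha⟩ := (Projectivization.mk_eq_mk_iff' ℂ _ _ t.rep_nonzero hc).1 h2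
    have h0 := congrFun ha 0
    have h1 := congrFun ha 1
    simp at h0 h1
    have hx : t.rep 0 ≠ 0 := by
      intro hx0
      apply t.rep_nonzero
      funext i; fin_cases i
      · simpa using hx0
      · rw [hx0] at h0; simp [← h1, h0]
    exact ⟨hx, by rw [← h1, ← h0]; ring⟩
  · rintro ⟨hx, hy⟩
    rw [← Projectivization.mk_rep t]
    apply (Projectivization.mk_eq_mk_iff' ℂ _ _ t.rep_nonzero hc).2
    refine ⟨t.rep 0, funext fun i => ?_⟩
    fin_cases i
    · simp
    · simp [hy]; ring

lemma tauEquiv4_apply (v : Fin 5 → ℂ) (i : Fin 5) : tauEquiv4 v i = v (4 - i) := rfl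

lemma tauEquiv4_ne_zero {v : Fin 5 → ℂ} (hv : v ≠ 0) : tauEquiv4 v ≠ 0 :=
  fun h => hv (tauEquiv4.map_eq_zero_iff.1 h)

lemma tauP4_mk (v : Fin 5 → ℂ) (hv : v ≠ 0) :
    tauP4 (Projectivization.mk ℂ v hv) =
      Projectivization.mk ℂ (tauEquiv4 v) (tauEquiv4_ne_zero hv) := by
  simp [tauP4, Projectivization.map_mk]

lemma tau_pres {p : P4} (hp : p ∈ lineL1) : tauP4 p ∈ lineL1 := by
  rw [← Projectivization.mk_rep p] at hp ⊢
  rw [mem_lineL1_mk] at hp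
  rw [tauP4_mk, mem_lineL1_mk]
  obtain ⟨h1, h2, h3⟩ := hp
  refine ⟨?_, ?_, ?_⟩
  · show p.rep (4 - 0) + p.rep (4 - 3) = 0
    norm_num
    exact h2
  · show p.rep (4 - 4) + p.rep (4 - 1) = 0
    norm_num
    exact h1
  · show p.rep (4 - 2) = 0
    norm_num
    exact h3

lemma tau_invol (p : P4) : tauP4 (tauP4 p) = p := by
  conv_lhs => rw [← Projectivization.mk_rep p]
  rw [tauP4_mk, tauP4_mk]
  rw [mk_congr' _ p.rep_nonzero (by
    funext i
    show p.rep (4 - (4 - i)) = p.rep i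
    rw [sub_sub_cancel])]
  exact Projectivization.mk_rep p

lemma sigmaEquiv4_apply (ω : ℂ) (hω : ω ≠ 0) (v : Fin 5 → ℂ) (i : Fin 5) :
    sigmaEquiv4 ω hω v i = ![1, ω ^ 2, ω, 1, ω ^ 2] i * v i := rfl

lemma sigmaEquiv4_ne_zero (ω : ℂ) (hω : ω ≠ 0) {v : Fin 5 → ℂ} (hv : v ≠ 0) :
    sigmaEquiv4 ω hω v ≠ 0 :=
  fun h => hv ((sigmaEquiv4 ω hω).map_eq_zero_iff.1 h)

lemma sigmaP4_mk (ω : ℂ) (hω : ω ≠ 0) (v : Fin 5 → ℂ) (hv : v ≠ 0) :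
    sigmaP4 ω hω (Projectivization.mk ℂ v hv) =
      Projectivization.mk ℂ (sigmaEquiv4 ω hω v) (sigmaEquiv4_ne_zero ω hω hv) := by
  simp [sigmaP4, Projectivization.map_mk]

lemma sigma_pres (ω : ℂ) (hω : ω ≠ 0) {p : P4} (hp : p ∈ lineL1) :
    sigmaP4 ω hω p ∈ lineL1 := by
  rw [← Projectivization.mk_rep p] at hp ⊢
  rw [mem_lineL1_mk] at hp
  rw [sigmaP4_mk, mem_lineL1_mk]
  obtain ⟨h1, h2, h3⟩ := hp
  refine ⟨?_, ?_, ?_⟩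
  · show 1 * p.rep 0 + 1 * p.rep 3 = 0
    linear_combination h1
  · show ω ^ 2 * p.rep 4 + ω ^ 2 * p.rep 1 = 0
    linear_combination ω ^ 2 * h2
  · show ω * p.rep 2 = 0
    linear_combination ω * h3

lemma sigma_invol3 (ω : ℂ) (hω : ω ≠ 0) (hc : ω ^ 3 = 1) (p : P4) :
    sigmaP4 ω hω (sigmaP4 ω hω (sigmaP4 ω hω p)) = p := by
  conv_lhs => rw [← Projectivization.mk_rep p]
  rw [sigmaP4_mk, sigmaP4_mk, sigmaP4_mk]
  rw [mk_congr' _ p.rep_nonzero (by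
    funext i
    fin_cases i
    · show (1:ℂ) * ((1:ℂ) * ((1:ℂ) * p.rep 0)) = p.rep 0; ring
    · show ω ^ 2 * (ω ^ 2 * (ω ^ 2 * p.rep 1)) = p.rep 1
      linear_combination (ω ^ 3 + 1) * p.rep 1 * hc
    · show ω * (ω * (ω * p.rep 2)) = p.rep 2
      linear_combination p.rep 2 * hc
    · show (1:ℂ) * ((1:ℂ) * ((1:ℂ) * p.rep 3)) = p.rep 3; ring
    · show ω ^ 2 * (ω ^ 2 * (ω ^ 2 * p.rep 4)) = p.rep 4
      linear_combination (ω ^ 3 + 1) * p.rep 4 * hc)]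
  exact Projectivization.mk_rep p

lemma P1_rep_cases (t : P1) : t.rep 0 ≠ 0 ∨ t.rep 1 ≠ 0 := by
  by_contra h
  push_neg at h
  apply t.rep_nonzero
  funext i; fin_cases i
  · exact h.1
  · exact h.2

/-- (i) L₁ ⊂ Q; (ii) L₁ is invariant under τ and σ; (iii) ψ(t) ∈ L₁ exactly for
t ∈ {[1:−1], [1:−ω], [1:−ω²]}.  In particular L₁ is a G-invariant trisecant line of Γ₁. -/
theorem stmt11 (ω : ℂ) (hω : IsPrimitiveRoot ω 3) :
    lineL1 ⊆ quadricQ4 ∧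
      (tauP4 '' lineL1 = lineL1 ∧ sigmaP4 ω (hω.ne_zero (by norm_num)) '' lineL1 = lineL1) ∧
      {t : P1 | psiP t ∈ lineL1} =
        {Projectivization.mk ℂ ![1, -1] (by intro h; simpa using congrFun h 0),
         Projectivization.mk ℂ ![1, -ω] (by intro h; simpa using congrFun h 0),
         Projectivization.mk ℂ ![1, -ω ^ 2] (by intro h; simpa using congrFun h 0)} := by
  have hc3 : ω ^ 3 = 1 := hω.pow_eq_one
  have hne1 : ω ≠ 1 := hω.ne_one (by norm_num)
  have hsum : 1 + ω + ω ^ 2 = 0 := by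
    have h : (ω - 1) * (1 + ω + ω ^ 2) = 0 := by linear_combination hc3
    rcases mul_eq_zero.1 h with h' | h'
    · exact absurd (sub_eq_zero.1 h') hne1
    · exact h'
  refine ⟨?_, ⟨?_, ?_⟩, ?_⟩
  · -- (i) L₁ ⊆ Q
    rintro p ⟨h1, h2, h3⟩
    show 2 * p.rep 2 ^ 2 = p.rep 1 * p.rep 3 - p.rep 0 * p.rep 4
    have e0 : p.rep 0 = -p.rep 3 := by linear_combination h1
    have e4 : p.rep 4 = -p.rep 1 := by linear_combination h2
    rw [e0, e4, h3]; ring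
  · -- (ii) τ
    apply Set.Subset.antisymm
    · rintro _ ⟨p, hp, rfl⟩
      exact tau_pres hp
    · intro p hp
      exact ⟨tauP4 p, tau_pres hp, tau_invol p⟩
  · -- (ii) σ
    apply Set.Subset.antisymm
    · rintro _ ⟨p, hp, rfl⟩
      exact sigma_pres _ _ hp
    · intro p hp
      have hω0 : ω ≠ 0 := hω.ne_zero (by norm_num)
      exact ⟨sigmaP4 ω hω0 (sigmaP4 ω hω0 p), sigma_pres ω hω0 (sigma_pres ω hω0 hp),
        sigma_invol3 ω hω0 hc3 p⟩
  · -- (iii)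
    ext t
    set x := t.rep 0 with hxdef
    set y := t.rep 1 with hydef
    have hmem : psiP t ∈ lineL1 ↔ (x ≠ 0 ∧ x ^ 3 + y ^ 3 = 0) := by
      rw [psiP, mem_lineL1_mk]
      simp only [psiVec, Matrix.cons_val_zero, Matrix.cons_val_one, Matrix.head_cons,
        Matrix.cons_val_two, Matrix.tail_cons, Matrix.cons_val_three, Matrix.cons_val_four]
      simp only [← hxdef, ← hydef]
      constructor
      · rintro ⟨h1, h2, h3⟩
        have hx : x ≠ 0 := by
          intro hx0
          rcases P1_rep_cases t with h | h
          · exact h hx0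
          · apply h
            have : 2 * y ^ 5 = 0 := by rw [hx0] at h2; linear_combination h2
            have hy5 : y ^ 5 = 0 := by linear_combination this / 2
            exact pow_eq_zero_iff (by norm_num) |>.1 hy5
        refine ⟨hx, ?_⟩
        have h1' : 2 * x ^ 2 * (x ^ 3 + y ^ 3) = 0 := by linear_combination h1
        have hx2 : (2 : ℂ) * x ^ 2 ≠ 0 := by
          simp [hx]
        rcases mul_eq_zero.1 h1' with h | h
        · exact absurd h hx2
        · exact h
      · rintro ⟨hx, h⟩
        refine ⟨by linear_combination 2 * x ^ 2 * h, by linear_combination 2 * y ^ 2 * h,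
          by linear_combination x * y * h⟩
    rw [Set.mem_setOf_eq, hmem]
    have hfac : x ^ 3 + y ^ 3 = (y + x) * (y + ω * x) * (y + ω ^ 2 * x) := by
      linear_combination (-x ^ 3 - x ^ 2 * y) * hc3 + (-x * y ^ 2 - x ^ 2 * y) * hsum
    simp only [Set.mem_insert_iff, Set.mem_singleton_iff]
    rw [P1_eq_mk t 1 (by intro h; simpa using congrFun h 0),
      P1_eq_mk t ω (by intro h; simpa using congrFun h 0),
      P1_eq_mk t (ω ^ 2) (by intro h; simpa using congrFun h 0)]
    constructor
    · rintro ⟨hx, h⟩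
      rw [hfac] at h
      rcases mul_eq_zero.1 h with h' | h'
      · rcases mul_eq_zero.1 h' with h'' | h''
        · exact Or.inl ⟨hx, by linear_combination h''⟩
        · exact Or.inr (Or.inl ⟨hx, by linear_combination h''⟩)
      · exact Or.inr (Or.inr ⟨hx, by linear_combination h'⟩)
    · rintro (⟨hx, h⟩ | ⟨hx, h⟩ | ⟨hx, h⟩) <;>
        refine ⟨hx, by rw [hfac]; rw [show y = _ from h]; ring⟩
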